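/- For every k ∈ ℕ^s, (1/p^m) Σ_{n=0}^{p^m−1} wal_k(x_n) = 1 if k belongs to the dual net D(C), and = 0 otherwise, where x_0,…,x_{p^m−1} are the points of the digital net P(C). -/

import Mathlib

open scoped BigOperators

/-- `ω_p = exp(2πi/p)`. -/
noncomputable def omega (p : ℕ) : ℂ := Complex.exp (2 * Real.pi * Complex.I / p)

/-- The `i`-th base-`p` digit of the natural number `n` (starting from `i = 0`). -/
def ndigit (p n i : ℕ) : ℕ := (n / p ^ i) % p

/-- The `i`-th base-`p` digit of the real number `x` (starting from `i = 1`):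
`x_i = ⌊p^i x⌋ mod p`. -/
noncomputable def xdigit (p : ℕ) (x : ℝ) (i : ℕ) : ℕ := (⌊(p : ℝ) ^ i * x⌋).toNat % p

/-- The base-`p` Walsh function `wal_k(x) = ω_p^{x_1 k_0 + x_2 k_1 + ⋯}`
(the digits of `k` vanish beyond index `k`, so the sum below is the full series). -/
noncomputable def wal (p k : ℕ) (x : ℝ) : ℂ :=
  omega p ^ (∑ i ∈ Finset.range (k + 1), xdigit p x (i + 1) * ndigit p k i)

/-- Multivariate Walsh function `wal_k(x) = ∏_j wal_{k_j}(x_j)`. -/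
noncomputable def walS (p s : ℕ) (k : Fin s → ℕ) (x : Fin s → ℝ) : ℂ :=
  ∏ j, wal p (k j) (x j)

/-- The vector of the first `m` base-`p` digits of `n`, viewed in `ℤ_p^m`. -/
def nvec (p m : ℕ) (n : ℕ) : Fin m → ZMod p := fun i => (ndigit p n i : ZMod p)

/-- The `n`-th point of the digital net generated by matrices `C = (C_1,…,C_s)`:
`x_{j,n} = Σ_{i=1}^m y_{j,n,i} p^{-i}` where `y⃗_{j,n} = C_j n⃗`. -/
noncomputable def netPoint (p s m : ℕ) (C : Fin s → Matrix (Fin m) (Fin m) (ZMod p)) (n : ℕ) :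
    Fin s → ℝ :=
  fun j => ∑ i : Fin m, ((Matrix.mulVec (C j) (nvec p m n)) i).val / (p : ℝ) ^ (i.val + 1)

/-- `C·k = C_1ᵀ k⃗_1^{(m)} + ⋯ + C_sᵀ k⃗_s^{(m)} ∈ ℤ_p^m`. -/
def Cdot (p s m : ℕ) (C : Fin s → Matrix (Fin m) (Fin m) (ZMod p)) (k : Fin s → ℕ) :
    Fin m → ZMod p :=
  ∑ j, Matrix.mulVec (Matrix.transpose (C j)) (nvec p m (k j))

/-- Digitwise addition modulo `p` of base-`p` digits: `k ⊕ l`. -/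
def dadd (p k l : ℕ) : ℕ :=
  ∑ i ∈ Finset.range (k + l + 1), ((ndigit p k i + ndigit p l i) % p) * p ^ i

/-- Digitwise subtraction modulo `p` of base-`p` digits: `k ⊖ l`. -/
def dsub (p k l : ℕ) : ℕ :=
  ∑ i ∈ Finset.range (k + l + 1), ((ndigit p k i + (p - ndigit p l i)) % p) * p ^ i
section helpers
variable {p : ℕ} [Fact p.Prime]

lemma hp2 : 2 ≤ p := (Fact.out : p.Prime).two_le

lemma omega_pow_p : omega p ^ p = 1 :=
  (Complex.isPrimitiveRoot_exp p (by have := hp2 (p := p); omega)).pow_eq_one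

lemma omega_pow_mod (a : ℕ) : omega p ^ a = omega p ^ (a % p) := by
  conv_lhs => rw [← Nat.div_add_mod a p]
  rw [pow_add, pow_mul, omega_pow_p, one_pow, one_mul]

lemma omega_pow_congr {a b : ℕ} (h : (a : ZMod p) = b) : omega p ^ a = omega p ^ b := by
  rw [omega_pow_mod a, omega_pow_mod b]
  congr 1
  rw [← ZMod.val_natCast, ← ZMod.val_natCast (n := p) b, h]

lemma omega_pow_val_natCast (a : ℕ) : omega p ^ ((a : ZMod p)).val = omega p ^ a :=
  omega_pow_congr (by rw [ZMod.natCast_val, ZMod.cast_natCast'])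

lemma chi_add (a b : ZMod p) :
    omega p ^ (a + b).val = omega p ^ a.val * omega p ^ b.val := by
  rw [← pow_add]
  refine omega_pow_congr ?_
  push_cast [ZMod.natCast_val, ZMod.cast_id]
  ring

lemma chi_sum {ι : Type*} (t : Finset ι) (g : ι → ZMod p) :
    omega p ^ (∑ i ∈ t, g i).val = ∏ i ∈ t, omega p ^ (g i).val := by
  classical
  induction t using Finset.induction with
  | empty => simp [ZMod.val_zero]
  | insert a t h ih => rw [Finset.sum_insert h, Finset.prod_insert h, chi_add, ih]

lemma sum_chi : ∑ b : ZMod p, omega p ^ b.val = 0 := by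
  have h1 : 1 < p := hp2
  rw [show (∑ b : ZMod p, omega p ^ b.val) = ∑ i ∈ Finset.range p, omega p ^ i from
    Finset.sum_nbij' (fun b => b.val) (fun i => (i : ZMod p))
      (fun b _ => Finset.mem_range.2 (ZMod.val_lt b))
      (fun i _ => Finset.mem_univ _)
      (fun b _ => ZMod.natCast_rightInverse b)
      (fun i hi => ZMod.val_natCast_of_lt (Finset.mem_range.1 hi))
      (fun _ _ => rfl)]
  exact (Complex.isPrimitiveRoot_exp p (by omega)).geom_sum_eq_zero h1

lemma sum_chi_mul (c : ZMod p) :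
    ∑ b : ZMod p, omega p ^ (b * c).val = if c = 0 then (p : ℂ) else 0 := by
  split_ifs with hc
  · simp [hc, ZMod.val_zero, ZMod.card]
  · calc ∑ b : ZMod p, omega p ^ (b * c).val
        = ∑ b : ZMod p, omega p ^ b.val :=
          Fintype.sum_equiv (Equiv.mulRight₀ c hc) _ _ (fun b => rfl)
      _ = 0 := sum_chi

lemma ndigit_lt (n i : ℕ) : ndigit p n i < p := Nat.mod_lt _ (by have := hp2 (p := p); omega)

lemma ndigit_eq_zero {k i : ℕ} (h : k < i) : ndigit p k i = 0 := by
  have : k < p ^ i := lt_of_lt_of_le (Nat.lt_pow_self (n := k) (hp2 (p := p)))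
    (Nat.pow_le_pow_right (by have := hp2 (p := p); omega) (by omega))
  simp [ndigit, Nat.div_eq_of_lt this]

lemma ndigit_finFun (m : ℕ) (f : Fin m → Fin p) (i : Fin m) :
    ndigit p (finFunctionFinEquiv f : ℕ) i = (f i : ℕ) := by
  show ((finFunctionFinEquiv f : ℕ) / p ^ (i : ℕ)) % p = (f i : ℕ)
  conv_rhs => rw [← finFunctionFinEquiv.symm_apply_apply f]
  rfl

end helpers

section xd
variable {p : ℕ} [Fact p.Prime]

set_option linter.unusedSectionVars false

lemma xdigit_net {m : ℕ} (y : Fin m → ZMod p) (r : ℕ) (hr : 1 ≤ r) :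
    xdigit p (∑ i : Fin m, ((y i).val : ℝ) / (p : ℝ) ^ ((i : ℕ) + 1)) r =
      if h : r ≤ m then (y ⟨r - 1, by omega⟩).val else 0 := by
  have hp2' : 2 ≤ p := hp2
  have hppos : (0 : ℝ) < p := by positivity
  set x : ℝ := ∑ i : Fin m, ((y i).val : ℝ) / (p : ℝ) ^ ((i : ℕ) + 1) with hxdef
  set f : Fin m → Fin p := fun i => ⟨(y i.rev).val, ZMod.val_lt _⟩ with hfdef
  set N : ℕ := (finFunctionFinEquiv f : ℕ) with hNdef
  have hNm : N < p ^ m := (finFunctionFinEquiv f).isLt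
  have hnd : ∀ i : Fin m, ndigit p N i = (y i.rev).val := fun i => ndigit_finFun m f i
  have hNx : (p : ℝ) ^ m * x = N := by
    rw [hxdef, Finset.mul_sum, hNdef, finFunctionFinEquiv_apply]
    push_cast
    rw [← Equiv.sum_comp (Fin.revPerm) (fun i => ((f i : ℕ) : ℝ) * (p:ℝ) ^ (i : ℕ))]
    refine Finset.sum_congr rfl (fun i _ => ?_)
    have h1 : (f (Fin.revPerm i) : ℕ) = (y i).val := by
      simp [hfdef, Fin.rev_rev]
    rw [h1]
    have h2 : ((Fin.revPerm i : Fin m) : ℕ) = m - 1 - (i : ℕ) := by rw [show ((Fin.revPerm i : Fin m) : ℕ) = ((Fin.rev i : Fin m) : ℕ) from rfl, Fin.val_rev]; omega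
    rw [h2]
    have him : (i : ℕ) < m := i.isLt
    have h3 : (p : ℝ) ^ (m - 1 - (i : ℕ)) * (p : ℝ) ^ ((i : ℕ) + 1) = (p : ℝ) ^ m := by
      rw [← pow_add]; congr 1; omega
    field_simp
    rw [← h3]; ring
  by_cases h : r ≤ m
  · have hx1 : (p : ℝ) ^ r * x = (N : ℝ) / ((p ^ (m - r) : ℕ) : ℝ) := by
      rw [eq_div_iff (by positivity), mul_comm ((p:ℝ)^r) x, mul_assoc]
      push_cast
      rw [← pow_add]
      rw [show r + (m - r) = m by omega, mul_comm x _, hNx]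
    rw [dif_pos h]
    unfold xdigit
    rw [hx1, Int.floor_toNat, Nat.floor_div_natCast, Nat.floor_natCast]
    have : N / p ^ (m - r) % p = ndigit p N (m - r) := rfl
    rw [this]
    have hmr : m - r < m := by omega
    have := hnd ⟨m - r, hmr⟩
    rw [show ndigit p N (m - r) = ndigit p N ((⟨m - r, hmr⟩ : Fin m) : ℕ) from rfl, this]
    congr 2
    ext
    simp [Fin.rev]
    omega
  · have hx1 : (p : ℝ) ^ r * x = ((N * p ^ (r - m) : ℕ) : ℝ) := by
      push_cast
      rw [show (p:ℝ) ^ r = (p:ℝ) ^ (r - m) * (p:ℝ) ^ m by rw [← pow_add]; congr 1; omega]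
      rw [mul_assoc, hNx]; ring
    rw [dif_neg h]
    unfold xdigit
    rw [hx1, Int.floor_natCast, Int.toNat_natCast]
    have : p ∣ N * p ^ (r - m) := Dvd.dvd.mul_left (dvd_pow_self p (by omega)) N
    omega

end xd

section walsec
variable {p : ℕ} [Fact p.Prime]
set_option linter.unusedSectionVars false

lemma wal_net {m : ℕ} (k : ℕ) (y : Fin m → ZMod p) :
    wal p k (∑ i : Fin m, ((y i).val : ℝ) / (p : ℝ) ^ ((i : ℕ) + 1)) =
      omega p ^ (dotProduct y (nvec p m k)).val := by
  set x : ℝ := ∑ i : Fin m, ((y i).val : ℝ) / (p : ℝ) ^ ((i : ℕ) + 1) with hxdef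
  have hxd : ∀ i : ℕ, xdigit p x (i + 1) =
      if h : i < m then (y ⟨i, h⟩).val else 0 := by
    intro i
    have := xdigit_net y (i + 1) (by omega)
    rw [hxdef, this]
    by_cases h : i < m
    · rw [dif_pos (by omega : i + 1 ≤ m), dif_pos h]
      congr 1
    · rw [dif_neg (by omega : ¬ (i + 1 ≤ m)), dif_neg h]
  unfold wal
  rw [← omega_pow_val_natCast]
  congr 1
  congr 1
  set M := max (k + 1) m with hM
  have S1 : ∑ i ∈ Finset.range (k + 1), xdigit p x (i + 1) * ndigit p k i =
      ∑ i ∈ Finset.range M, xdigit p x (i + 1) * ndigit p k i := by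
    refine Finset.sum_subset (Finset.range_subset_range.2 (by omega)) (fun i hi hni => ?_)
    have : k < i := by simp only [Finset.mem_range] at hi hni; omega
    rw [ndigit_eq_zero this, mul_zero]
  have S2 : ∑ i ∈ Finset.range m, xdigit p x (i + 1) * ndigit p k i =
      ∑ i ∈ Finset.range M, xdigit p x (i + 1) * ndigit p k i := by
    refine Finset.sum_subset (Finset.range_subset_range.2 (by omega)) (fun i hi hni => ?_)
    have him : ¬ i < m := by simp only [Finset.mem_range] at hi hni; omega
    rw [hxd i, dif_neg him, zero_mul]
  rw [S1, ← S2]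
  rw [Nat.cast_sum]
  rw [← Fin.sum_univ_eq_sum_range
    (fun i => ((xdigit p x (i + 1) * ndigit p k i : ℕ) : ZMod p)) m]
  refine Finset.sum_congr rfl (fun i _ => ?_)
  rw [Nat.cast_mul, hxd i, dif_pos i.isLt]
  show (((y ⟨(i : ℕ), i.isLt⟩).val : ZMod p)) * _ = y i * nvec p m k i
  rw [ZMod.natCast_rightInverse]
  rfl

lemma walS_eq (s m : ℕ) (C : Fin s → Matrix (Fin m) (Fin m) (ZMod p)) (k : Fin s → ℕ)
    (n : ℕ) :
    walS p s k (netPoint p s m C n) =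
      omega p ^ (dotProduct (nvec p m n) (Cdot p s m C k)).val := by
  unfold walS netPoint
  have h1 : ∀ j, wal p (k j)
      (∑ i : Fin m, ((Matrix.mulVec (C j) (nvec p m n)) i).val / (p : ℝ) ^ ((i : ℕ) + 1)) =
      omega p ^ (dotProduct (Matrix.mulVec (C j) (nvec p m n)) (nvec p m (k j))).val :=
    fun j => wal_net (k j) _
  rw [Finset.prod_congr rfl (fun j _ => h1 j), ← chi_sum]
  congr 1
  congr 1
  have h2 : ∀ j, dotProduct (Matrix.mulVec (C j) (nvec p m n)) (nvec p m (k j)) =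
      dotProduct (nvec p m n) (Matrix.mulVec (Matrix.transpose (C j)) (nvec p m (k j))) := by
    intro j
    rw [Matrix.dotProduct_mulVec, Matrix.vecMul_transpose]
  rw [Finset.sum_congr rfl (fun j _ => h2 j)]
  unfold Cdot
  simp [dotProduct, Finset.mul_sum, Finset.sum_apply]
  rw [Finset.sum_comm]

end walsec


/-- character property of the dual net. -/
theorem statement3 (p s m : ℕ) [Fact p.Prime] (hs : 1 ≤ s) (hm : 1 ≤ m)
    (C : Fin s → Matrix (Fin m) (Fin m) (ZMod p)) (k : Fin s → ℕ) :
    (1 / (p : ℂ) ^ m) * ∑ n ∈ Finset.range (p ^ m), walS p s k (netPoint p s m C n) =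
      if Cdot p s m C k = 0 then 1 else 0 := by
  have hp2' : 2 ≤ p := hp2
  set v := Cdot p s m C k with hv
  have key : ∑ n ∈ Finset.range (p ^ m), walS p s k (netPoint p s m C n) =
      if v = 0 then (p : ℂ) ^ m else 0 := by
    calc ∑ n ∈ Finset.range (p ^ m), walS p s k (netPoint p s m C n)
        = ∑ n ∈ Finset.range (p ^ m), omega p ^ (dotProduct (nvec p m n) v).val :=
          Finset.sum_congr rfl (fun n _ => walS_eq s m C k n)
      _ = ∑ a : Fin (p ^ m), omega p ^ (dotProduct (nvec p m (a : ℕ)) v).val :=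
          (Fin.sum_univ_eq_sum_range _ _).symm
      _ = ∑ f : Fin m → Fin p,
            omega p ^ (dotProduct (fun i => ((f i : ℕ) : ZMod p)) v).val := by
          rw [← Equiv.sum_comp finFunctionFinEquiv
            (fun a : Fin (p ^ m) => omega p ^ (dotProduct (nvec p m (a : ℕ)) v).val)]
          refine Finset.sum_congr rfl (fun f _ => ?_)
          have hnv : nvec p m ((finFunctionFinEquiv f : ℕ)) =
              fun i => ((f i : ℕ) : ZMod p) := by
            funext i
            show ((ndigit p (finFunctionFinEquiv f : ℕ) i : ℕ) : ZMod p) = _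
            rw [ndigit_finFun m f i]
          rw [hnv]
      _ = ∑ f : Fin m → Fin p, ∏ i : Fin m, omega p ^ ((((f i : ℕ) : ZMod p)) * v i).val :=
          Finset.sum_congr rfl (fun f _ => chi_sum Finset.univ _)
      _ = ∏ i : Fin m, ∑ a : Fin p, omega p ^ ((((a : ℕ) : ZMod p)) * v i).val :=
          (Fintype.prod_sum (fun i (a : Fin p) => omega p ^ ((((a : ℕ) : ZMod p)) * v i).val)).symm
      _ = ∏ i : Fin m, ∑ b : ZMod p, omega p ^ (b * v i).val := by
          refine Finset.prod_congr rfl (fun i _ => ?_)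
          refine Fintype.sum_bijective (fun a : Fin p => ((a : ℕ) : ZMod p)) ?_ _ _ (fun a => rfl)
          rw [Fintype.bijective_iff_injective_and_card]
          refine ⟨fun a b hab => ?_, by simp [ZMod.card]⟩
          have hab' : (((a : ℕ) : ZMod p)).val = (((b : ℕ) : ZMod p)).val := by
            exact congrArg ZMod.val hab
          have ha := ZMod.val_natCast_of_lt a.isLt
          have hb := ZMod.val_natCast_of_lt b.isLt
          ext
          rw [← ha, ← hb, hab']
      _ = ∏ i : Fin m, (if v i = 0 then (p : ℂ) else 0) :=
          Finset.prod_congr rfl (fun i _ => sum_chi_mul (v i))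
      _ = if v = 0 then (p : ℂ) ^ m else 0 := by
          by_cases hv0 : v = 0
          · rw [if_pos hv0]
            rw [Finset.prod_congr rfl (fun i _ => if_pos (by rw [hv0]; rfl))]
            simp
          · rw [if_neg hv0]
            obtain ⟨i, hi⟩ : ∃ i, v i ≠ 0 := by
              by_contra h
              push_neg at h
              exact hv0 (funext h)
            exact Finset.prod_eq_zero (Finset.mem_univ i) (if_neg hi)
  rw [key]
  have hpm : ((p : ℂ) ^ m) ≠ 0 := pow_ne_zero _ (Nat.cast_ne_zero.2 (by omega))
  split_ifs with h
  · field_simp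
  · ring
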